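/- Let p, q ∈ ℝ³ with ‖p‖ = d > 0 and ‖q‖ = r, and suppose r ≤ d. Then the far-field approximation error satisfies |‖p − q‖ − (d − ⟨p,q⟩/d)| ≤ r²/d. (This bounds the error in the approximation ‖p − q‖ ≈ d − u^T q with u = p/d.) -/

import Mathlib

open scoped RealInnerProductSpace

theorem far_field_approximation_error
    (p q : EuclideanSpace ℝ (Fin 3)) (d r : ℝ)
    (hp : ‖p‖ = d) (hd : 0 < d) (hq : ‖q‖ = r) (hrd : r ≤ d) :
    |‖p - q‖ - (d - ⟪p, q⟫ / d)| ≤ r ^ 2 / d := by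
  set n := ‖p - q‖ with hn
  set t := ⟪p, q⟫ with ht
  have hr : 0 ≤ r := hq ▸ norm_nonneg q
  have hn0 : 0 ≤ n := norm_nonneg _
  have hn2 : n ^ 2 = d ^ 2 - 2 * t + r ^ 2 := by
    rw [hn, ht, ← hp, ← hq]
    exact norm_sub_sq_real p q
  have hcs : |t| ≤ d * r := by
    rw [ht, ← hp, ← hq]
    exact abs_real_inner_le_norm p q
  have hcs1 : t ≤ d * r := (abs_le.mp hcs).2
  have hcs2 : -(d * r) ≤ t := (abs_le.mp hcs).1
  have hdne : d ≠ 0 := ne_of_gt hd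
  set u := t / d with hu
  have htu : t = u * d := by rw [hu, div_mul_cancel₀ t hdne]
  set v := r ^ 2 / d with hv
  have hrv : r ^ 2 = v * d := by rw [hv, div_mul_cancel₀ _ hdne]
  have hv0 : 0 ≤ v := div_nonneg (sq_nonneg r) hd.le
  have hu1 : u ≤ r := by
    rw [hu, div_le_iff₀ hd]; linarith [hcs1]
  have hu2 : -r ≤ u := by
    rw [hu, le_div_iff₀ hd]; linarith [hcs2]
  have hdu0 : 0 ≤ d - u := by linarith
  have hsq : (d - u) ^ 2 ≤ n ^ 2 := by
    have hru : u ^ 2 ≤ r ^ 2 := by nlinarith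
    nlinarith
  have hge : d - u ≤ n := by nlinarith [sq_nonneg (n + (d - u))]
  have key : n ^ 2 ≤ ((d - u) + v) ^ 2 := by
    nlinarith [sq_nonneg (u - v), sq_nonneg (d - r), sq_nonneg (d + r),
      mul_le_mul_of_nonneg_right hrd hr, mul_pos hd hd]
  have hle : n ≤ (d - u) + v := by nlinarith [sq_nonneg (n + ((d - u) + v))]
  rw [abs_le]
  constructor <;> [linarith; linarith]
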